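/- Let α > 0, β > 0 and let (y(t), P(t)), t ∈ (π, t̂), be the parametrization of the right Poincaré half-return map as above. Then lim_{t → π⁺} P'(t)/y'(t) = −e^{απ}; equivalently, the derivative dP_R/dy of the half-return map tends to −e^{απ} as y → +∞. -/

import Mathlib

open Real

noncomputable def psiPlus (α t : ℝ) : ℝ :=
  1 - Real.exp (α * t) * (Real.cos t - α * Real.sin t)

noncomputable def psiMinus (α t : ℝ) : ℝ :=
  1 - Real.exp (-(α * t)) * (Real.cos t + α * Real.sin t)

noncomputable def yPar (α β t : ℝ) : ℝ :=
  -(β / (1 + α ^ 2)) * Real.exp (-(α * t)) * psiPlus α t / Real.sin t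

noncomputable def PPar (α β t : ℝ) : ℝ :=
  (β / (1 + α ^ 2)) * Real.exp (α * t) * psiMinus α t / Real.sin t

noncomputable def Anum (α t : ℝ) : ℝ :=
  α * psiMinus α t * Real.sin t + (1 + α ^ 2) * Real.exp (-(α * t)) * Real.sin t ^ 2
    - psiMinus α t * Real.cos t

noncomputable def Bden (α t : ℝ) : ℝ :=
  -(α * psiPlus α t * Real.sin t) + (1 + α ^ 2) * Real.exp (α * t) * Real.sin t ^ 2
    - psiPlus α t * Real.cos t

lemma hasDerivAt_psiMinus (α t : ℝ) :
    HasDerivAt (psiMinus α) (Real.exp (-(α * t)) * (1 + α ^ 2) * Real.sin t) t := by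
  have h1 : HasDerivAt (fun t : ℝ => -(α * t)) (-α) t := by
    exact ((hasDerivAt_id t).const_mul α).neg.congr_deriv (by ring)
  have h2 := h1.exp
  have h3 : HasDerivAt (fun t : ℝ => Real.cos t + α * Real.sin t)
      (-Real.sin t + α * Real.cos t) t :=
    (Real.hasDerivAt_cos t).add ((Real.hasDerivAt_sin t).const_mul α)
  have h4 := (h2.mul h3).const_sub 1
  exact h4.congr_deriv (by ring)

lemma hasDerivAt_psiPlus (α t : ℝ) :
    HasDerivAt (psiPlus α) (Real.exp (α * t) * (1 + α ^ 2) * Real.sin t) t := by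
  have h1 : HasDerivAt (fun t : ℝ => α * t) α t := by
    simpa using (hasDerivAt_id t).const_mul α
  have h2 := h1.exp
  have h3 : HasDerivAt (fun t : ℝ => Real.cos t - α * Real.sin t)
      (-Real.sin t - α * Real.cos t) t :=
    (Real.hasDerivAt_cos t).sub ((Real.hasDerivAt_sin t).const_mul α)
  have h4 := (h2.mul h3).const_sub 1
  exact h4.congr_deriv (by ring)

lemma deriv_PPar (α β t : ℝ) (hs : Real.sin t ≠ 0) :
    deriv (PPar α β) t
      = (β / (1 + α ^ 2)) * Real.exp (α * t) * Anum α t / Real.sin t ^ 2 := by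
  have h1 : HasDerivAt (fun t : ℝ => α * t) α t := by
    simpa using (hasDerivAt_id t).const_mul α
  have hv : HasDerivAt (fun t => (β / (1 + α ^ 2)) * Real.exp (α * t) * psiMinus α t)
      ((β / (1 + α ^ 2)) * (α * Real.exp (α * t)) * psiMinus α t
        + (β / (1 + α ^ 2)) * Real.exp (α * t)
          * (Real.exp (-(α * t)) * (1 + α ^ 2) * Real.sin t)) t := by
    have := ((h1.exp.const_mul (β / (1 + α ^ 2))).mul (hasDerivAt_psiMinus α t))
    exact this.congr_deriv (by ring)
  have h := hv.div (Real.hasDerivAt_sin t) hs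
  have : HasDerivAt (PPar α β) _ t := h
  rw [this.deriv]
  rw [div_eq_div_iff (by positivity) (by positivity)]
  simp only [Anum]
  ring

lemma deriv_yPar (α β t : ℝ) (hs : Real.sin t ≠ 0) :
    deriv (yPar α β) t
      = -((β / (1 + α ^ 2)) * Real.exp (-(α * t)) * Bden α t) / Real.sin t ^ 2 := by
  have h1 : HasDerivAt (fun t : ℝ => -(α * t)) (-α) t := by
    exact ((hasDerivAt_id t).const_mul α).neg.congr_deriv (by ring)
  have hv : HasDerivAt (fun t => -(β / (1 + α ^ 2)) * Real.exp (-(α * t)) * psiPlus α t)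
      (-(β / (1 + α ^ 2)) * (-α * Real.exp (-(α * t))) * psiPlus α t
        + -(β / (1 + α ^ 2)) * Real.exp (-(α * t))
          * (Real.exp (α * t) * (1 + α ^ 2) * Real.sin t)) t := by
    have := ((h1.exp.const_mul (-(β / (1 + α ^ 2)))).mul (hasDerivAt_psiPlus α t))
    exact this.congr_deriv (by ring)
  have h := hv.div (Real.hasDerivAt_sin t) hs
  have : HasDerivAt (yPar α β) _ t := h
  rw [this.deriv]
  rw [div_eq_div_iff (by positivity) (by positivity)]
  simp only [Bden]
  ring

lemma contA (α : ℝ) : Continuous (Anum α) := by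
  unfold Anum psiMinus; fun_prop

lemma contB (α : ℝ) : Continuous (Bden α) := by
  unfold Bden psiPlus; fun_prop

/-- As `t → π⁺` (i.e. as the starting height `y → +∞`), the derivative of the right
half-return map, `P'(t)/y'(t)`, tends to `-e^{απ}`. -/
theorem stmt_10 (α β : ℝ) (hα : 0 < α) (hβ : 0 < β) :
    Filter.Tendsto (fun t => deriv (PPar α β) t / deriv (yPar α β) t)
      (nhdsWithin π (Set.Ioi π)) (nhds (-Real.exp (α * π))) := by
  have hc : (0:ℝ) < β / (1 + α ^ 2) := by positivity
  have hBπ : Bden α π = 1 + Real.exp (α * π) := by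
    simp [Bden, psiPlus]
  have hAπ : Anum α π = 1 + Real.exp (-(α * π)) := by
    simp [Anum, psiMinus]
  set g : ℝ → ℝ := fun t => -(Real.exp (α * t) ^ 2 * Anum α t / Bden α t) with hg
  -- limit of g
  have hBne : Bden α π ≠ 0 := by rw [hBπ]; positivity
  have hgcont : ContinuousAt g π := by
    apply ContinuousAt.neg
    exact (((Real.continuous_exp.comp (continuous_const.mul continuous_id)).pow 2).continuousAt.mul
      (contA α).continuousAt).div (contB α).continuousAt hBne
  have hgval : g π = -Real.exp (α * π) := by
    rw [hg]
    simp only [hAπ, hBπ]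
    rw [Real.exp_neg]
    field_simp
    ring
  have hgt : Filter.Tendsto g (nhdsWithin π (Set.Ioi π)) (nhds (-Real.exp (α * π))) := by
    rw [← hgval]
    exact hgcont.continuousWithinAt.tendsto
  -- eventual equality
  refine Filter.Tendsto.congr' ?_ hgt
  have h1 : ∀ᶠ t in nhdsWithin π (Set.Ioi π), t < π + 1 :=
    nhdsWithin_le_nhds (Filter.Tendsto.eventually_lt_const (by linarith) Filter.tendsto_id)
  have h2 : ∀ᶠ t in nhdsWithin π (Set.Ioi π), Bden α t ≠ 0 :=
    nhdsWithin_le_nhds ((contB α).continuousAt.eventually_ne hBne)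
  have h3 : ∀ᶠ t in nhdsWithin π (Set.Ioi π), π < t :=
    eventually_mem_nhdsWithin
  filter_upwards [h1, h2, h3] with t ht1 ht2 ht3
  have hst : Real.sin t ≠ 0 := by
    have hsp : 0 < Real.sin (t - π) := by
      apply Real.sin_pos_of_pos_of_lt_pi <;> [linarith; nlinarith [Real.pi_gt_three]]
    have h5 := Real.sin_sub_pi t
    have : Real.sin t < 0 := by linarith
    exact ne_of_lt this
  rw [deriv_PPar α β t hst, deriv_yPar α β t hst, hg]
  have he : Real.exp (-(α * t)) = (Real.exp (α * t))⁻¹ := Real.exp_neg _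
  rw [he]
  have hs2 : Real.sin t ^ 2 ≠ 0 := pow_ne_zero _ hst
  field_simp
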